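/- arXiv:2111.13269 — 4 statements merged into one kernel-verified Lean document; each statement's English description precedes it below -/
import Mathlib

section
/- Let n ≥ 2 and let F₁ and F₂ be graphs with at most n vertices each. Set r = n^{|V(F₁)|} and let F = F₁ ⊔ rF₂ (the disjoint union of F₁ with r copies of F₂). Then for all graphs G and H with exactly n vertices: hom(F,G) = hom(F,H) if and only if either (hom(F₁,G)·hom(F₂,G) = 0 and hom(F₁,H)·hom(F₂,H) = 0) or (hom(F₁,G) = hom(F₁,H) and hom(F₂,G) = hom(F₂,H)). -/
open SimpleGraph

noncomputable def homCount {α β : Type} (G : SimpleGraph α) (H : SimpleGraph β) : ℕ :=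
  Nat.card (G →g H)

/-- The disjoint union of r copies of a graph H. -/
def copies {β : Type} (r : ℕ) (H : SimpleGraph β) : SimpleGraph (Fin r × β) where
  Adj x y := x.1 = y.1 ∧ H.Adj x.2 y.2
  symm := ⟨fun x y ⟨h1, h2⟩ => ⟨h1.symm, h2.symm⟩⟩
  loopless := ⟨fun x ⟨_, h2⟩ => H.loopless.irrefl _ h2⟩

section aux

variable {α β γ : Type}

/-- Homs from a disjoint sum correspond to pairs of homs. -/
def sumHomEquiv (A : SimpleGraph α) (B : SimpleGraph β) (K : SimpleGraph γ) :
    ((A ⊕g B) →g K) ≃ (A →g K) × (B →g K) where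
  toFun f := (⟨fun a => f (Sum.inl a), fun h => f.map_rel (by simpa using h)⟩,
              ⟨fun b => f (Sum.inr b), fun h => f.map_rel (by simpa using h)⟩)
  invFun p := ⟨fun x => Sum.elim p.1 p.2 x, by
    rintro (a | a) (b | b) h <;> simp only [SimpleGraph.sum_adj] at h
    · exact p.1.map_rel h
    · exact p.2.map_rel h⟩
  left_inv f := by
    ext x
    cases x <;> rfl
  right_inv p := by
    ext x <;> rfl

/-- Homs from `copies r B` correspond to `r`-tuples of homs. -/
def copiesHomEquiv (r : ℕ) (B : SimpleGraph β) (K : SimpleGraph γ) :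
    ((copies r B) →g K) ≃ (Fin r → (B →g K)) where
  toFun f i := ⟨fun b => f (i, b), fun h => f.map_rel ⟨rfl, h⟩⟩
  invFun F := ⟨fun x => F x.1 x.2, by
    rintro ⟨i, a⟩ ⟨j, b⟩ ⟨h1, h2⟩
    dsimp only at h1
    subst h1
    exact (F i).map_rel h2⟩
  left_inv f := by ext ⟨i, b⟩; rfl
  right_inv F := by ext i b; rfl

instance homFinite [Fintype α] [Fintype γ] (A : SimpleGraph α) (K : SimpleGraph γ) :
    Finite (A →g K) :=
  Finite.of_injective (fun f => (f : α → γ)) (DFunLike.coe_injective)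

lemma homCount_sum_copies [Fintype α] [Fintype β] [Fintype γ]
    (r : ℕ) (A : SimpleGraph α) (B : SimpleGraph β) (K : SimpleGraph γ) :
    homCount (A ⊕g copies r B) K = homCount A K * homCount B K ^ r := by
  unfold homCount
  rw [Nat.card_congr ((sumHomEquiv A (copies r B) K).trans
    (Equiv.prodCongr (Equiv.refl _) (copiesHomEquiv r B K))), Nat.card_prod,
    Nat.card_fun, Nat.card_eq_fintype_card (α := Fin r), Fintype.card_fin]

lemma homCount_le [Fintype α] [Fintype γ] (A : SimpleGraph α) (K : SimpleGraph γ) :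
    homCount A K ≤ Fintype.card γ ^ Fintype.card α := by
  have := Nat.card_le_card_of_injective (fun f : A →g K => (f : α → γ))
    DFunLike.coe_injective
  simpa [homCount, Nat.card_fun, Nat.card_eq_fintype_card] using this

lemma arith (r a b c d : ℕ) (hr : 1 ≤ r) (ha : a ≤ r) (hc : c ≤ r) :
    a * b ^ r = c * d ^ r ↔ (a * b = 0 ∧ c * d = 0) ∨ (a = c ∧ b = d) := by
  have hr0 : r ≠ 0 := Nat.one_le_iff_ne_zero.mp hr
  constructor
  · intro h
    rcases Nat.eq_zero_or_pos (a * b) with h0 | hpos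
    · left
      refine ⟨h0, ?_⟩
      have hz : a * b ^ r = 0 := by
        rcases Nat.mul_eq_zero.1 h0 with h' | h' <;> simp [h', hr0]
      rw [hz] at h
      rcases Nat.mul_eq_zero.1 h.symm with h' | h'
      · simp [h']
      · simp [pow_eq_zero_iff hr0 |>.mp h']
    · right
      have hapos : 0 < a := Nat.pos_of_mul_pos_left (by rwa [mul_comm] at hpos)
      have hbpos : 0 < b := Nat.pos_of_mul_pos_left hpos
      have hcd : 0 < c * d ^ r := by
        rw [← h]; exact Nat.mul_pos hapos (Nat.pow_pos hbpos)
      have hcpos : 0 < c := Nat.pos_of_mul_pos_left (by rwa [mul_comm] at hcd)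
      have hdpos : 0 < d := by
        rcases Nat.eq_zero_or_pos d with h' | h'
        · rw [h'] at hcd; simp [hr0] at hcd
        · exact h'
      set g := Nat.gcd b d with hg
      have hgpos : 0 < g := Nat.gcd_pos_of_pos_left d hbpos
      set b₀ := b / g with hb₀
      set d₀ := d / g with hd₀
      have hbeq : b = b₀ * g := (Nat.div_mul_cancel (Nat.gcd_dvd_left b d)).symm
      have hdeq : d = d₀ * g := (Nat.div_mul_cancel (Nat.gcd_dvd_right b d)).symm
      have hcop : Nat.Coprime b₀ d₀ := Nat.coprime_div_gcd_div_gcd hgpos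
      have hb₀pos : 0 < b₀ := Nat.div_pos (Nat.le_of_dvd hbpos (Nat.gcd_dvd_left b d)) hgpos
      have hd₀pos : 0 < d₀ := Nat.div_pos (Nat.le_of_dvd hdpos (Nat.gcd_dvd_right b d)) hgpos
      have h' : a * b₀ ^ r = c * d₀ ^ r := by
        have : (a * b₀ ^ r) * g ^ r = (c * d₀ ^ r) * g ^ r := by
          rw [mul_assoc, mul_assoc, ← mul_pow, ← mul_pow, ← hbeq, ← hdeq]; exact h
        exact Nat.eq_of_mul_eq_mul_right (Nat.pow_pos hgpos) this
      -- d₀ ^ r divides a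
      have hdvd1 : d₀ ^ r ∣ a := by
        have hdvd : d₀ ^ r ∣ a * b₀ ^ r := by rw [h']; exact dvd_mul_left _ _
        exact (hcop.symm.pow r r).dvd_of_dvd_mul_right hdvd
      have hdvd2 : b₀ ^ r ∣ c := by
        have hdvd : b₀ ^ r ∣ c * d₀ ^ r := by rw [← h']; exact dvd_mul_left _ _
        exact (hcop.pow r r).dvd_of_dvd_mul_right hdvd
      have hd₀1 : d₀ = 1 := by
        by_contra hne
        have h2 : 2 ≤ d₀ := by omega
        have : 2 ^ r ≤ d₀ ^ r := Nat.pow_le_pow_left h2 r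
        have hle : d₀ ^ r ≤ a := Nat.le_of_dvd hapos hdvd1
        have := Nat.lt_two_pow_self (n := r)
        omega
      have hb₀1 : b₀ = 1 := by
        by_contra hne
        have h2 : 2 ≤ b₀ := by omega
        have : 2 ^ r ≤ b₀ ^ r := Nat.pow_le_pow_left h2 r
        have hle : b₀ ^ r ≤ c := Nat.le_of_dvd hcpos hdvd2
        have := Nat.lt_two_pow_self (n := r)
        omega
      have hbd : b = d := by rw [hbeq, hdeq, hb₀1, hd₀1]
      refine ⟨?_, hbd⟩
      rw [hbd] at h
      exact Nat.eq_of_mul_eq_mul_right (Nat.pow_pos hdpos) h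
  · rintro (⟨h1, h2⟩ | ⟨h1, h2⟩)
    · have e1 : a * b ^ r = 0 := by
        rcases Nat.mul_eq_zero.1 h1 with h' | h' <;> simp [h', hr0]
      have e2 : c * d ^ r = 0 := by
        rcases Nat.mul_eq_zero.1 h2 with h' | h' <;> simp [h', hr0]
      rw [e1, e2]
    · rw [h1, h2]

end aux

theorem stmt_7 {α₁ α₂ γ δ : Type} [Fintype α₁] [Fintype α₂] [Fintype γ] [Fintype δ]
    (n : ℕ) (hn : 2 ≤ n)
    (F₁ : SimpleGraph α₁) (F₂ : SimpleGraph α₂)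
    (h1 : Fintype.card α₁ ≤ n) (h2 : Fintype.card α₂ ≤ n)
    (G : SimpleGraph γ) (H : SimpleGraph δ)
    (hG : Fintype.card γ = n) (hH : Fintype.card δ = n) :
    homCount (F₁ ⊕g copies (n ^ Fintype.card α₁) F₂) G
      = homCount (F₁ ⊕g copies (n ^ Fintype.card α₁) F₂) H ↔
    ((homCount F₁ G * homCount F₂ G = 0 ∧ homCount F₁ H * homCount F₂ H = 0) ∨
     (homCount F₁ G = homCount F₁ H ∧ homCount F₂ G = homCount F₂ H)) := by
  set r := n ^ Fintype.card α₁ with hrdef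
  have hr : 1 ≤ r := Nat.one_le_pow _ _ (by omega)
  have haG : homCount F₁ G ≤ r := by
    have := homCount_le F₁ G; rwa [hG] at this
  have haH : homCount F₁ H ≤ r := by
    have := homCount_le F₁ H; rwa [hH] at this
  rw [homCount_sum_copies, homCount_sum_copies]
  exact arith r _ _ _ _ hr haG haH
end

section
/- Let r ≥ 1 and let x, x', y, y', z be natural numbers with x ≤ r, x' ≤ r, z ≥ 2, and z = x·y^r = x'·(y')^r. Then x = x' and y = y'. -/
lemma aux_val_lt (r x : ℕ) (hr : 1 ≤ r) (hx : x ≤ r) (hx0 : x ≠ 0) (p : ℕ)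
    (hp : p.Prime) : x.factorization p < r := by
  by_contra h
  push_neg at h
  have h1 : p ^ r ∣ x := dvd_trans (pow_dvd_pow p h) (Nat.ordProj_dvd x p)
  have h2 : p ^ r ≤ x := Nat.le_of_dvd (Nat.pos_of_ne_zero hx0) h1
  have h3 : r < 2 ^ r := Nat.lt_two_pow_self
  have h4 : 2 ^ r ≤ p ^ r := Nat.pow_le_pow_left hp.two_le r
  omega

lemma aux_val_eq (r x y z : ℕ) (hr : 1 ≤ r) (hx : x ≤ r) (hx0 : x ≠ 0) (hy0 : y ≠ 0)
    (h1 : z = x * y ^ r) (p : ℕ) (hp : p.Prime) :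
    x.factorization p = z.factorization p % r := by
  have : z.factorization p = x.factorization p + r * y.factorization p := by
    subst h1
    rw [Nat.factorization_mul hx0 (pow_ne_zero r hy0), Nat.factorization_pow]
    simp [mul_comm]
  rw [this, Nat.add_mul_mod_self_left,
    Nat.mod_eq_of_lt (aux_val_lt r x hr hx hx0 p hp)]

theorem stmt_8 (r x x' y y' z : ℕ) (hr : 1 ≤ r)
    (hx : x ≤ r) (hx' : x' ≤ r) (hz : 2 ≤ z)
    (h1 : z = x * y ^ r) (h2 : z = x' * y' ^ r) :
    x = x' ∧ y = y' := by
  have hz0 : z ≠ 0 := by omega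
  have hx0 : x ≠ 0 := by rintro rfl; simp at h1; omega
  have hx0' : x' ≠ 0 := by rintro rfl; simp at h2; omega
  have hy0 : y ≠ 0 := by rintro rfl; simp [zero_pow (by omega : r ≠ 0)] at h1; omega
  have hy0' : y' ≠ 0 := by rintro rfl; simp [zero_pow (by omega : r ≠ 0)] at h2; omega
  have hxx : x = x' := by
    apply Nat.eq_of_factorization_eq hx0 hx0'
    intro p
    by_cases hp : p.Prime
    · rw [aux_val_eq r x y z hr hx hx0 hy0 h1 p hp,
        aux_val_eq r x' y' z hr hx' hx0' hy0' h2 p hp]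
    · simp [Nat.factorization_eq_zero_of_not_prime _ hp]
  refine ⟨hxx, ?_⟩
  subst hxx
  have : y ^ r = y' ^ r := by
    have := h1.symm.trans h2
    exact Nat.eq_of_mul_eq_mul_left (Nat.pos_of_ne_zero hx0) this
  exact Nat.pow_left_injective (by omega : r ≠ 0) this
end

section
/- There is no finite list of graphs F₁, …, F_k such that for all graphs G and H, the equality hom(G, F_i) = hom(H, F_i) for all i ∈ [k] implies (G contains a triangle iff H contains a triangle). Concretely: for every finite list F₁, …, F_k there exist graphs G and H such that hom(G,F_i) = hom(H,F_i) = 0 for all i, G contains a triangle (a clique of size 3), and H is triangle-free. -/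
open SimpleGraph

/-- The Mycielski construction. -/
def Myc {α : Type} (G : SimpleGraph α) : SimpleGraph (Option (α ⊕ α)) where
  Adj x y := match x, y with
    | some (.inl u), some (.inl v) => G.Adj u v
    | some (.inl u), some (.inr v) => G.Adj u v
    | some (.inr u), some (.inl v) => G.Adj u v
    | none, some (.inr _) => True
    | some (.inr _), none => True
    | _, _ => False
  symm := by
    constructor
    rintro (_ | (u | u)) (_ | (v | v)) h <;> try trivial
    all_goals exact G.symm.symm _ _ h
  loopless := by
    constructor
    rintro (_ | (u | u)) h <;> try trivial
    exact G.loopless.irrefl u h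

lemma myc_cliqueFree {α : Type} {G : SimpleGraph α} (h : G.CliqueFree 3) :
    (Myc G).CliqueFree 3 := by
  classical
  intro s hs
  rw [is3Clique_iff] at hs
  obtain ⟨a, b, c, hab, hac, hbc, -⟩ := hs
  have tri : ∀ u v w : α, G.Adj u v → G.Adj u w → G.Adj v w → False := fun u v w h1 h2 h3 =>
    h {u, v, w} (is3Clique_triple_iff.2 ⟨h1, h2, h3⟩)
  rcases a with _ | (u | u) <;> rcases b with _ | (v | v) <;> rcases c with _ | (w | w) <;>
    first
      | exact hab | exact hac | exact hbc
      | exact tri _ _ _ hab hac hbc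

lemma myc_not_colorable {α : Type} {G : SimpleGraph α} {n : ℕ}
    (h : ¬ G.Colorable n) : ¬ (Myc G).Colorable (n + 1) := by
  rintro ⟨C⟩
  apply h
  set kk := C none with hkk
  have twin_ne : ∀ v : α, C (some (.inr v)) ≠ kk := fun v =>
    (C.valid (show (Myc G).Adj none (some (.inr v)) from trivial)).symm
  let c : α → {x : Fin (n + 1) // x ≠ kk} := fun v =>
    if hv : C (some (.inl v)) = kk then ⟨C (some (.inr v)), twin_ne v⟩
    else ⟨C (some (.inl v)), hv⟩
  have valid : ∀ {u v : α}, G.Adj u v → c u ≠ c v := by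
    intro u v huv heq
    have hadj11 : (Myc G).Adj (some (.inl u)) (some (.inl v)) := huv
    have hadj21 : (Myc G).Adj (some (.inr u)) (some (.inl v)) := huv
    have hadj12 : (Myc G).Adj (some (.inl u)) (some (.inr v)) := huv
    by_cases h1 : C (some (.inl u)) = kk <;> by_cases h2 : C (some (.inl v)) = kk
    · exact C.valid hadj11 (h1.trans h2.symm)
    · simp only [c, dif_pos h1, dif_neg h2, Subtype.mk.injEq] at heq
      exact C.valid hadj21 heq
    · simp only [c, dif_neg h1, dif_pos h2, Subtype.mk.injEq] at heq
      exact C.valid hadj12 heq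
    · simp only [c, dif_neg h1, dif_neg h2, Subtype.mk.injEq] at heq
      exact C.valid hadj11 heq
  have Co : G.Coloring {x : Fin (n + 1) // x ≠ kk} := Coloring.mk c fun huv => valid huv
  have hcard : Fintype.card {x : Fin (n + 1) // x ≠ kk} = n := by
    rw [Fintype.card_subtype_compl, Fintype.card_subtype_eq, Fintype.card_fin]
    omega
  have := Co.colorable
  rwa [hcard] at this

def sz : ℕ → ℕ
  | 0 => 1
  | t + 1 => 2 * sz t + 1

lemma card_myc (m : ℕ) : Fintype.card (Option (Fin m ⊕ Fin m)) = 2 * m + 1 := by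
  simp [two_mul]

noncomputable def mychain : (t : ℕ) → SimpleGraph (Fin (sz t))
  | 0 => ⊥
  | t + 1 => (Myc (mychain t)).map (Fintype.equivFinOfCardEq (card_myc (sz t))).toEmbedding

lemma mychain_cliqueFree : ∀ t, (mychain t).CliqueFree 3 := by
  intro t
  induction t with
  | zero => exact cliqueFree_bot (by norm_num)
  | succ t ih =>
    rw [mychain]
    exact cliqueFree_map_iff.2 (myc_cliqueFree ih)

lemma mychain_not_colorable : ∀ t, ¬ (mychain t).Colorable t := by
  intro t
  induction t with
  | zero =>
    rintro ⟨c⟩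
    exact (c ⟨0, by norm_num [sz]⟩).elim0
  | succ t ih =>
    rintro ⟨c⟩
    exact myc_not_colorable ih
      ⟨c.comp (SimpleGraph.Iso.map (Fintype.equivFinOfCardEq (card_myc (sz t)))
        (Myc (mychain t))).toHom⟩

theorem stmt_16 (k : ℕ) (F : Fin k → Σ n : ℕ, SimpleGraph (Fin n)) :
    ∃ (n m : ℕ) (G : SimpleGraph (Fin n)) (H : SimpleGraph (Fin m)),
      (∀ i : Fin k, homCount G (F i).2 = 0 ∧ homCount H (F i).2 = 0) ∧
      (∃ t, G.IsNClique 3 t) ∧ H.CliqueFree 3 := by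
  classical
  set N : ℕ := Finset.univ.sup (fun i => (F i).1) with hN
  have hle : ∀ i : Fin k, (F i).1 ≤ N := fun i =>
    Finset.le_sup (f := fun i => (F i).1) (Finset.mem_univ i)
  refine ⟨N + 3, sz N, ⊤, mychain N, ?_, ?_, mychain_cliqueFree N⟩
  · intro i
    constructor
    · -- no hom from K_{N+3} into F i
      rw [homCount, Nat.card_eq_zero]
      left
      constructor
      intro f
      have finj : Function.Injective f := by
        intro a b hfab
        by_contra hab
        exact (F i).2.ne_of_adj (f.map_adj (by simp [hab] : (⊤ : SimpleGraph (Fin (N + 3))).Adj a b)) hfab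
      have := Fintype.card_le_of_injective f finj
      simp only [Fintype.card_fin] at this
      have h2 := hle i
      omega
    · -- no hom from mychain N into F i
      rw [homCount, Nat.card_eq_zero]
      left
      constructor
      intro f
      have hcol : (F i).2.Colorable (F i).1 := by
        have := (F i).2.colorable_of_fintype
        rwa [Fintype.card_fin] at this
      obtain ⟨C⟩ := hcol
      have : (mychain N).Colorable (F i).1 := ⟨C.comp f⟩
      exact mychain_not_colorable N (this.mono (hle i))
  · refine ⟨{⟨0, by omega⟩, ⟨1, by omega⟩, ⟨2, by omega⟩}, is3Clique_triple_iff.2 ⟨?_, ?_, ?_⟩⟩ <;>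
      simp [Fin.ext_iff]
end

section
/- Let n ≥ 2 and let F be a graph with |V(F)| < 4ℓ + 2 for some ℓ ≥ 1. Then hom(F, C_{12ℓ+6}) = hom(F, C_{4ℓ+2} ⊔ C_{4ℓ+2} ⊔ C_{4ℓ+2}) = hom(F, C_{6ℓ+3} ⊔ C_{6ℓ+3}). -/
open SimpleGraph

namespace Stmt17

open SimpleGraph Walk

variable {α : Type}

/-- Cycle graph on `ZMod n`. -/
def zc (n : ℕ) : SimpleGraph (ZMod n) where
  Adj x y := x ≠ y ∧ (x - y = 1 ∨ y - x = 1)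
  symm := ⟨by rintro x y ⟨h, h2 | h2⟩; exacts [⟨h.symm, Or.inr h2⟩, ⟨h.symm, Or.inl h2⟩]⟩
  loopless := ⟨by rintro x ⟨h, -⟩; exact h rfl⟩

lemma one_ne_neg_one {m : ℕ} (hm : 3 ≤ m) : (1 : ZMod m) ≠ -1 := by
  haveI : NeZero m := ⟨by omega⟩
  intro h
  have h2 : ((2 : ℕ) : ZMod m) = 0 := by push_cast; linear_combination h
  rw [ZMod.natCast_eq_zero_iff] at h2
  have := Nat.le_of_dvd (by norm_num) h2
  omega

lemma one_ne_zero' {m : ℕ} (hm : 3 ≤ m) : (1 : ZMod m) ≠ 0 := by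
  haveI : NeZero m := ⟨by omega⟩
  intro h
  have h2 : ((1 : ℕ) : ZMod m) = 0 := by push_cast; exact h
  rw [ZMod.natCast_eq_zero_iff] at h2
  have := Nat.le_of_dvd (by norm_num) h2
  omega

variable {F : SimpleGraph α}

/-- The condition that `g` maps every edge of `F` to an edge of the cycle `zc m`. -/
def IsCyc (F : SimpleGraph α) (m : ℕ) (g : α → ZMod m) : Prop :=
  ∀ ⦃x y⦄, F.Adj x y → g y - g x = 1 ∨ g x - g y = 1

/-- The ±1 step of `g` along an edge. -/
def eps {m : ℕ} (g : α → ZMod m) (x y : α) : ℤ := if g y - g x = 1 then 1 else -1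

lemma eps_cast {m : ℕ} {g : α → ZMod m} (hg : IsCyc F m g) {x y : α} (ha : F.Adj x y) :
    ((eps g x y : ℤ) : ZMod m) = g y - g x := by
  unfold eps
  split
  · rename_i h; rw [h]; norm_num
  · rename_i h
    rcases hg ha with h1 | h1
    · exact absurd h1 h
    · push_cast
      linear_combination h1

lemma eps_symm {m : ℕ} (hm : 3 ≤ m) {g : α → ZMod m} (hg : IsCyc F m g) {x y : α}
    (ha : F.Adj x y) : eps g y x = - eps g x y := by
  unfold eps
  split <;> split <;> rename_i h1 h2
  · exfalso
    apply one_ne_neg_one hm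
    linear_combination -h1 - h2
  · norm_num
  · norm_num
  · exfalso
    rcases hg ha with h | h
    · exact h2 h
    · exact h1 h

/-- Sum of the ±1 steps of `g` along a walk. -/
def wsum {m : ℕ} (g : α → ZMod m) : {x y : α} → F.Walk x y → ℤ
  | _, _, Walk.nil => 0
  | _, _, @Walk.cons _ _ x y _ _ p => eps g x y + wsum g p

@[simp] lemma wsum_nil {m : ℕ} (g : α → ZMod m) {x : α} :
    wsum g (Walk.nil : F.Walk x x) = 0 := rfl

@[simp] lemma wsum_cons {m : ℕ} (g : α → ZMod m) {x y z : α} (h : F.Adj x y)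
    (p : F.Walk y z) : wsum g (Walk.cons h p) = eps g x y + wsum g p := rfl

@[simp] lemma wsum_append {m : ℕ} (g : α → ZMod m) {x y z : α} (p : F.Walk x y)
    (q : F.Walk y z) : wsum g (p.append q) = wsum g p + wsum g q := by
  induction p with
  | nil => simp
  | cons h p ih => simp [ih, add_assoc]

@[simp] lemma wsum_copy {m : ℕ} (g : α → ZMod m) {x y x' y' : α} (p : F.Walk x y)
    (hx : x = x') (hy : y = y') : wsum g (p.copy hx hy) = wsum g p := by
  subst hx; subst hy; rw [Walk.copy_rfl_rfl]

lemma wsum_reverse {m : ℕ} (hm : 3 ≤ m) {g : α → ZMod m} (hg : IsCyc F m g) {x y : α}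
    (p : F.Walk x y) : wsum g p.reverse = - wsum g p := by
  induction p with
  | nil => simp
  | cons h p ih =>
    rw [Walk.reverse_cons, wsum_append, ih, wsum_cons, wsum_nil, eps_symm hm hg h, wsum_cons]
    ring

lemma wsum_cast {m : ℕ} {g : α → ZMod m} (hg : IsCyc F m g) {x y : α} (p : F.Walk x y) :
    ((wsum g p : ℤ) : ZMod m) = g y - g x := by
  induction p with
  | nil => simp
  | cons h p ih =>
    rw [wsum_cons]
    push_cast
    rw [ih, eps_cast hg h]
    ring

lemma wsum_abs_le {m : ℕ} (g : α → ZMod m) {x y : α} (p : F.Walk x y) :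
    |wsum g p| ≤ p.length := by
  induction p with
  | nil => simp
  | cons h p ih =>
    rename_i u v w
    rw [wsum_cons, Walk.length_cons]
    refine (abs_add_le _ _).trans ?_
    have : |eps g u v| ≤ 1 := by unfold eps; split <;> simp
    push_cast
    linarith

lemma int_eq_zero_of_dvd_of_abs_lt {a : ℤ} {m : ℕ} (hd : (m : ℤ) ∣ a) (h : |a| < m) :
    a = 0 := by
  obtain ⟨c, rfl⟩ := hd
  rcases eq_or_ne c 0 with rfl | hc
  · ring
  · exfalso
    have h1 : (1 : ℤ) ≤ |c| := Int.one_le_abs (by omega)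
    rw [abs_mul] at h
    have hm0 : (0 : ℤ) ≤ m := by positivity
    have habs : |(m : ℤ)| = (m : ℤ) := abs_of_nonneg hm0
    rw [habs] at h
    have : (m : ℤ) * 1 ≤ (m : ℤ) * |c| := by
      apply mul_le_mul_of_nonneg_left h1 hm0
    linarith

/-- Splitting a walk that revisits its start. -/
lemma wsum_split {m : ℕ} (g : α → ZMod m) [DecidableEq α] {z x : α} (d : F.Walk z x)
    (hzd : z ∈ d.support.tail) :
    ∃ (c : F.Walk z z) (d' : F.Walk z x), wsum g d = wsum g c + wsum g d' ∧
      1 ≤ c.length ∧ c.length + d'.length = d.length := by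
  cases d with
  | nil => simp at hzd
  | cons h r =>
    have hzr : z ∈ r.support := by simpa using hzd
    refine ⟨Walk.cons h (r.takeUntil z hzr), r.dropUntil z hzr, ?_, by simp, ?_⟩
    · rw [wsum_cons, wsum_cons]
      have : wsum g r = wsum g ((r.takeUntil z hzr).append (r.dropUntil z hzr)) := by
        rw [Walk.take_spec]
      rw [this, wsum_append]
      ring
    · have : ((r.takeUntil z hzr).append (r.dropUntil z hzr)).length = r.length := by
        rw [Walk.take_spec]
      rw [Walk.length_append] at this
      simp [Walk.length_cons]
      omega

lemma wsum_closed [Fintype α] {m : ℕ} (hm : 3 ≤ m) (hcard : Fintype.card α < m)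
    {g : α → ZMod m} (hg : IsCyc F m g) {x : α} (W : F.Walk x x) : wsum g W = 0 := by
  classical
  haveI : NeZero m := ⟨by omega⟩
  suffices H : ∀ n {x : α} (W : F.Walk x x), W.length ≤ n → wsum g W = 0 from
    H W.length W le_rfl
  intro n
  induction n with
  | zero =>
    intro x W hW
    cases W with
    | nil => rfl
    | cons h p => simp [Walk.length_cons] at hW
  | succ n IH =>
    intro x W hW
    cases W with
    | nil => rfl
    | cons h p =>
      rename_i y
      by_cases hnd : p.support.Nodup
      · -- short closed walk: use the mod-m constraint
        have h1 : ((wsum g (Walk.cons h p) : ℤ) : ZMod m) = 0 := by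
          rw [wsum_cast hg]; ring
        have h2 : |wsum g (Walk.cons h p)| ≤ (Walk.cons h p).length :=
          wsum_abs_le g _
        have h3 : p.support.length ≤ Fintype.card α := hnd.length_le_card
        have h4 : p.support.length = p.length + 1 := p.length_support
        have h5 : (Walk.cons h p).length = p.length + 1 := Walk.length_cons _ _
        have hd : (m : ℤ) ∣ wsum g (Walk.cons h p) :=
          (ZMod.intCast_zmod_eq_zero_iff_dvd _ m).mp h1
        refine int_eq_zero_of_dvd_of_abs_lt hd ?_
        have hlt : ((Walk.cons h p).length : ℤ) < (m : ℤ) := by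
          have : (Walk.cons h p).length < m := by omega
          exact_mod_cast this
        linarith
      · -- find a repeated vertex and split off a shorter closed walk
        obtain ⟨z, hz2⟩ : ∃ z, 2 ≤ p.support.count z := by
          by_contra hc
          push_neg at hc
          exact hnd (List.nodup_iff_count_le_one.mpr fun z => by have := hc z; omega)
        have hz : z ∈ p.support := by
          have : 0 < p.support.count z := by omega
          exact List.count_pos_iff.mp this
        set p1 := p.takeUntil z hz with hp1
        set d := p.dropUntil z hz with hd
        have hspec : p1.append d = p := p.take_spec hz
        have hcount1 : p1.support.count z = 1 := p.count_support_takeUntil_eq_one hz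
        have hzd : z ∈ d.support.tail := by
          have hsup : p.support = p1.support ++ d.support.tail := by
            rw [← hspec, Walk.support_append]
          have : p.support.count z = p1.support.count z + (d.support.tail).count z := by
            rw [hsup, List.count_append]
          have hpos : 0 < (d.support.tail).count z := by omega
          exact List.count_pos_iff.mp hpos
        obtain ⟨c, d', hsum, hc1, hclen⟩ := wsum_split g d hzd
        have hlen : p1.length + d.length = p.length := by
          have := congrArg Walk.length hspec
          rwa [Walk.length_append] at this
        have hWlen : (Walk.cons h p).length = p.length + 1 := Walk.length_cons _ _
        -- the shorter closed walk at x
        have hW' : wsum g (Walk.cons h (p1.append d')) = 0 := by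
          apply IH
          rw [Walk.length_cons, Walk.length_append]
          omega
        have hC : wsum g c = 0 := by
          apply IH
          omega
        rw [wsum_cons] at hW' ⊢
        rw [wsum_append] at hW'
        have : wsum g p = wsum g p1 + wsum g d := by rw [← hspec, wsum_append]
        rw [this, hsum]
        linarith

lemma wsum_eq [Fintype α] {m : ℕ} (hm : 3 ≤ m) (hcard : Fintype.card α < m)
    {g : α → ZMod m} (hg : IsCyc F m g) {u v : α} (p q : F.Walk u v) :
    wsum g p = wsum g q := by
  have := wsum_closed hm hcard hg (p.append q.reverse)
  rw [wsum_append, wsum_reverse hm hg] at this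
  linarith

variable (F)

/-- Base point of the connected component of `x`. -/
noncomputable def bp (x : α) : α := (F.connectedComponentMk x).out

lemma bp_reachable (x : α) : F.Reachable (bp F x) x := by
  apply ConnectedComponent.exact
  exact (F.connectedComponentMk x).out_eq

lemma bp_adj {x y : α} (ha : F.Adj x y) : bp F x = bp F y :=
  congrArg (fun c : F.ConnectedComponent => c.out) (ConnectedComponent.connectedComponentMk_eq_of_adj ha)

lemma bp_out (c : F.ConnectedComponent) : bp F c.out = c.out :=
  congrArg (fun c : F.ConnectedComponent => c.out) c.out_eq

/-- A choice of walk from the base point to `x`. -/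
noncomputable def wk (x : α) : F.Walk (bp F x) x := (bp_reachable F x).some

end Stmt17

namespace Stmt17

open SimpleGraph Walk

variable {α : Type} {F : SimpleGraph α}

section Lift

variable [Fintype α] {k m : ℕ}

lemma key_step (hm : 3 ≤ m) (hcard : Fintype.card α < m) {g : α → ZMod m}
    (hg : IsCyc F m g) {x y : α} (ha : F.Adj x y) :
    wsum g (wk F y) = wsum g (wk F x) + eps g x y := by
  have q : F.Walk (bp F y) y :=
    ((wk F x).copy (bp_adj F ha) rfl).append (Walk.cons ha Walk.nil)
  have := wsum_eq hm hcard hg (wk F y)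
    (((wk F x).copy (bp_adj F ha) rfl).append (Walk.cons ha Walk.nil))
  rw [wsum_append, wsum_copy, wsum_cons, wsum_nil] at this
  linarith

/-- The lifted map. -/
noncomputable def liftFun (t : F.ConnectedComponent → Fin k) (g : α → ZMod m) (x : α) :
    ZMod (k * m) :=
  ((m * (t (F.connectedComponentMk x)).val + (g (bp F x)).val : ℕ) : ZMod (k * m)) +
    ((wsum g (wk F x) : ℤ) : ZMod (k * m))

lemma liftFun_isCyc (hm : 3 ≤ m) (hk : 1 ≤ k) (hcard : Fintype.card α < m)
    (t : F.ConnectedComponent → Fin k) {g : α → ZMod m} (hg : IsCyc F m g) :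
    IsCyc F (k * m) (liftFun t g) := by
  intro x y ha
  have hcomp : F.connectedComponentMk x = F.connectedComponentMk y :=
    ConnectedComponent.connectedComponentMk_eq_of_adj ha
  have hbp : bp F x = bp F y := bp_adj F ha
  have hkey : wsum g (wk F y) = wsum g (wk F x) + eps g x y := key_step hm hcard hg ha
  have hgbp : g (bp F x) = g (bp F y) := by rw [hbp]
  have hdiff : liftFun t g y - liftFun t g x = ((eps g x y : ℤ) : ZMod (k * m)) := by
    unfold liftFun
    rw [hcomp, hgbp, hkey]
    push_cast
    ring
  unfold eps at hdiff
  split at hdiff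
  · left; rw [hdiff]; norm_num
  · right
    have : liftFun t g x - liftFun t g y = -((-1 : ℤ) : ZMod (k * m)) := by
      rw [← hdiff]; ring
    rw [this]; norm_num


def projMap (k m : ℕ) : ZMod (k * m) →+* ZMod m := ZMod.castHom ⟨k, mul_comm k m⟩ (ZMod m)

lemma isCyc_proj {f : α → ZMod (k * m)} (hf : IsCyc F (k * m) f) :
    IsCyc F m (fun x => projMap k m (f x)) := by
  intro x y ha
  rcases hf ha with h | h
  · left; show projMap k m (f y) - projMap k m (f x) = 1; rw [← map_sub, h, map_one]
  · right; show projMap k m (f x) - projMap k m (f y) = 1; rw [← map_sub, h, map_one]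

lemma proj_wsum (hm : 3 ≤ m) {f : α → ZMod (k * m)} (hf : IsCyc F (k * m) f)
    {u v : α} (p : F.Walk u v) :
    ((wsum (fun x => projMap k m (f x)) p : ℤ) : ZMod (k * m)) = f v - f u := by
  induction p with
  | nil => simp
  | cons h p ih =>
    rename_i a b c
    rw [wsum_cons]
    push_cast
    rw [ih]
    have key : ((eps (fun x => projMap k m (f x)) a b : ℤ) : ZMod (k * m)) = f b - f a := by
      unfold eps
      rcases hf h with h1 | h1
      · rw [if_pos]
        · push_cast; linear_combination -h1
        · show projMap k m (f b) - projMap k m (f a) = 1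
          rw [← map_sub, h1, map_one]
      · rw [if_neg]
        · push_cast; linear_combination h1
        · intro hc
          apply one_ne_neg_one hm (m := m)
          have hfb : f b - f a = -(1 : ZMod (k * m)) := by linear_combination -h1
          have h2 : projMap k m (f b) - projMap k m (f a) = -1 := by
            rw [← map_sub, hfb]; simp
          linear_combination h2 - hc
    rw [key]; ring

/-- The main covering-space equivalence, at the level of edge-maps. -/
noncomputable def liftEquivSub (hm : 3 ≤ m) (hk : 1 ≤ k) (hcard : Fintype.card α < m) :
    {f : α → ZMod (k * m) // IsCyc F (k * m) f} ≃
      (F.ConnectedComponent → Fin k) × {g : α → ZMod m // IsCyc F m g} where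
  toFun f := (fun c => ⟨(f.1 c.out).val / m, by
      haveI : NeZero (k * m) := ⟨Nat.mul_ne_zero (by omega) (by omega)⟩
      have h1 := ZMod.val_lt (f.1 c.out)
      rw [Nat.div_lt_iff_lt_mul (by omega)]
      omega⟩,
    ⟨fun x => projMap k m (f.1 x), isCyc_proj f.2⟩)
  invFun p := ⟨liftFun p.1 p.2.1, liftFun_isCyc hm hk hcard p.1 p.2.2⟩
  left_inv f := by
    haveI : NeZero m := ⟨by omega⟩
    haveI : NeZero (k * m) := ⟨Nat.mul_ne_zero (by omega) (by omega)⟩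
    apply Subtype.ext
    funext x
    have h1 : ((wsum (fun z => projMap k m (f.1 z)) (wk F x) : ℤ) : ZMod (k * m))
        = f.1 x - f.1 (bp F x) := proj_wsum hm f.2 (wk F x)
    have hproj : projMap k m (f.1 (bp F x)) = (((f.1 (bp F x)).val : ℕ) : ZMod m) := by
      conv_lhs => rw [← ZMod.natCast_rightInverse (f.1 (bp F x))]
      rw [map_natCast]
    have h2 : (projMap k m (f.1 (bp F x))).val = (f.1 (bp F x)).val % m := by
      rw [hproj, ZMod.val_natCast]
    have h3 : m * ((f.1 (bp F x)).val / m) + (f.1 (bp F x)).val % m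
        = (f.1 (bp F x)).val := Nat.div_add_mod _ _
    show ((m * ((f.1 (bp F x)).val / m)
        + (projMap k m (f.1 (bp F x))).val : ℕ) : ZMod (k * m))
        + ((wsum (fun z => projMap k m (f.1 z)) (wk F x) : ℤ) : ZMod (k * m)) = f.1 x
    rw [h1, h2, h3, ZMod.natCast_rightInverse (f.1 (bp F x))]
    ring
  right_inv p := by
    obtain ⟨t, g⟩ := p
    haveI : NeZero m := ⟨by omega⟩
    haveI : NeZero (k * m) := ⟨Nat.mul_ne_zero (by omega) (by omega)⟩
    have hwk0 : ∀ c : F.ConnectedComponent, wsum g.1 (wk F c.out) = 0 := by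
      intro c
      have h4 : wsum g.1 ((wk F c.out).copy (bp_out F c) rfl) = wsum g.1 (wk F c.out) :=
        wsum_copy _ _ _ _
      rw [← h4]
      exact wsum_closed hm hcard g.2 _
    have hlift : ∀ c : F.ConnectedComponent,
        liftFun t g.1 c.out = ((m * (t c).val + (g.1 c.out).val : ℕ) : ZMod (k * m)) := by
      intro c
      unfold liftFun
      have hoe : F.connectedComponentMk c.out = c := c.out_eq
      rw [hoe]
      have hg2 : g.1 (bp F c.out) = g.1 c.out := by rw [bp_out]
      rw [hg2, hwk0 c]
      push_cast
      ring
    have hbound : ∀ c : F.ConnectedComponent, m * (t c).val + (g.1 c.out).val < k * m := by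
      intro c
      have h5 : (t c).val + 1 ≤ k := (t c).isLt
      have h6 : (g.1 c.out).val < m := ZMod.val_lt _
      calc m * (t c).val + (g.1 c.out).val < m * (t c).val + m := by omega
        _ = m * ((t c).val + 1) := by ring
        _ ≤ m * k := Nat.mul_le_mul_left m h5
        _ = k * m := mul_comm m k
    refine Prod.ext ?_ ?_
    · funext c
      apply Fin.ext
      show (liftFun t g.1 c.out).val / m = (t c).val
      rw [hlift c, ZMod.val_natCast, Nat.mod_eq_of_lt (hbound c)]
      rw [Nat.mul_add_div (by omega)]
      have : (g.1 c.out).val / m = 0 := Nat.div_eq_of_lt (ZMod.val_lt _)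
      omega
    · apply Subtype.ext
      funext x
      show projMap k m (liftFun t g.1 x) = g.1 x
      unfold liftFun
      rw [map_add, map_natCast, map_intCast]
      have h7 : ((wsum g.1 (wk F x) : ℤ) : ZMod m) = g.1 x - g.1 (bp F x) :=
        wsum_cast g.2 (wk F x)
      rw [h7]
      push_cast
      rw [ZMod.natCast_self]
      have h8 : (((g.1 (bp F x)).val : ℕ) : ZMod m) = g.1 (bp F x) :=
        ZMod.natCast_rightInverse _
      rw [h8]
      ring

end Lift

/-- Transport hom-sets along an isomorphism of codomains. -/
def homCongr {β γ : Type} {H1 : SimpleGraph β} {H2 : SimpleGraph γ} (e : H1 ≃g H2) :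
    (F →g H1) ≃ (F →g H2) where
  toFun f := ⟨fun x => e (f x), fun ha => e.map_rel_iff.mpr (f.map_rel' ha)⟩
  invFun f := ⟨fun x => e.symm (f x), fun ha => e.symm.map_rel_iff.mpr (f.map_rel' ha)⟩
  left_inv f := by
    apply DFunLike.ext
    intro x
    show e.symm (e (f x)) = f x
    simp
  right_inv f := by
    apply DFunLike.ext
    intro x
    show e (e.symm (f x)) = f x
    simp

section ZcIso

variable (n : ℕ)

/-- `Fin n ≃ ZMod n`. -/
def finZMod [NeZero n] : Fin n ≃ ZMod n where
  toFun i := ((i.val : ℕ) : ZMod n)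
  invFun x := ⟨x.val, x.val_lt⟩
  left_inv i := by
    apply Fin.ext
    show (((i.val : ℕ) : ZMod n)).val = i.val
    rw [ZMod.val_natCast, Nat.mod_eq_of_lt i.isLt]
  right_inv x := ZMod.natCast_rightInverse x

lemma finZMod_sub [NeZero n] (u v : Fin n) :
    (((u - v).val : ℕ) : ZMod n) = ((u.val : ℕ) : ZMod n) - ((v.val : ℕ) : ZMod n) := by
  rw [Fin.sub_def]
  show ((((n - v.val + u.val) % n : ℕ)) : ZMod n) = _
  rw [ZMod.natCast_mod]
  push_cast [Nat.cast_sub (le_of_lt v.isLt)]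
  rw [ZMod.natCast_self]
  ring

lemma finZMod_val_one (hn : 3 ≤ n) (w : Fin n) :
    (((w.val : ℕ) : ZMod n) = 1) ↔ w.val = 1 := by
  haveI : NeZero n := ⟨by omega⟩
  haveI : Fact (1 < n) := ⟨by omega⟩
  constructor
  · intro h
    have := congrArg ZMod.val h
    rwa [ZMod.val_natCast, Nat.mod_eq_of_lt w.isLt, ZMod.val_one] at this
  · intro h; rw [h]; norm_num

/-- The cycle graph on `Fin n` is isomorphic to the cycle graph on `ZMod n`. -/
def zcIso (hn : 3 ≤ n) : cycleGraph n ≃g zc n := by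
  haveI : NeZero n := ⟨by omega⟩
  refine ⟨finZMod n, ?_⟩
  intro u v
  show ((finZMod n) u ≠ (finZMod n) v ∧ _) ↔ _
  rw [cycleGraph_adj']
  constructor
  · rintro ⟨hne, h | h⟩
    · left
      apply (finZMod_val_one n hn _).mp
      rw [finZMod_sub]
      exact h
    · right
      apply (finZMod_val_one n hn _).mp
      rw [finZMod_sub]
      exact h
  · intro h
    have hne : u ≠ v := by
      rintro rfl
      simp at h
    refine ⟨fun hc => hne ((finZMod n).injective hc), ?_⟩
    rcases h with h | h
    · left
      show ((u.val : ℕ) : ZMod n) - ((v.val : ℕ) : ZMod n) = 1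
      rw [← finZMod_sub]
      exact (finZMod_val_one n hn _).mpr h
    · right
      show ((v.val : ℕ) : ZMod n) - ((u.val : ℕ) : ZMod n) = 1
      rw [← finZMod_sub]
      exact (finZMod_val_one n hn _).mpr h

/-- Hom-sets into `zc n` as edge-maps. -/
def homEquivSub {F : SimpleGraph α} (hn : 3 ≤ n) :
    (F →g zc n) ≃ {g : α → ZMod n // IsCyc F n g} where
  toFun f := ⟨f, fun x y ha => ((f.map_rel' ha).2).symm⟩
  invFun g := ⟨g.1, fun {x y} ha => by
    refine ⟨?_, (g.2 ha).symm⟩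
    intro he
    rcases g.2 ha with h | h
    · rw [he, sub_self] at h
      exact one_ne_zero' hn h.symm
    · rw [he, sub_self] at h
      exact one_ne_zero' hn h.symm⟩
  left_inv f := rfl
  right_inv g := rfl

end ZcIso

section Box

/-- Disjoint union of `ι`-many copies of `G`. -/
def boxSum (ι : Type) {β : Type} (G : SimpleGraph β) : SimpleGraph (ι × β) where
  Adj u v := u.1 = v.1 ∧ G.Adj u.2 v.2
  symm := ⟨by rintro u v ⟨h1, h2⟩; exact ⟨h1.symm, h2.symm⟩⟩
  loopless := ⟨by rintro u ⟨-, h⟩; exact G.loopless.irrefl _ h⟩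

lemma fst_eq_of_reachable {ι β : Type} {G : SimpleGraph β} (f : F →g boxSum ι G) {x y : α}
    (h : F.Reachable x y) : (f x).1 = (f y).1 := by
  obtain ⟨w⟩ := h
  induction w with
  | nil => rfl
  | cons ha p ih => exact ((f.map_rel' ha).1).trans ih

/-- Homs into a disjoint union of copies of `G`. -/
noncomputable def boxEquiv (ι β : Type) (G : SimpleGraph β) :
    (F →g boxSum ι G) ≃ (F.ConnectedComponent → ι) × (F →g G) where
  toFun f := (fun c => (f c.out).1, ⟨fun x => (f x).2, fun ha => (f.map_rel' ha).2⟩)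
  invFun p := ⟨fun x => (p.1 (F.connectedComponentMk x), p.2 x),
    fun {x y} ha => ⟨by
      show p.1 (F.connectedComponentMk x) = p.1 (F.connectedComponentMk y)
      rw [ConnectedComponent.connectedComponentMk_eq_of_adj ha],
      p.2.map_rel' ha⟩⟩
  left_inv f := by
    apply DFunLike.ext
    intro x
    have h1 : (f ((F.connectedComponentMk x).out)).1 = (f x).1 :=
      fst_eq_of_reachable f (bp_reachable F x)
    show ((f ((F.connectedComponentMk x).out)).1, (f x).2) = f x
    rw [h1]
  right_inv p := by
    obtain ⟨t, g⟩ := p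
    refine Prod.ext ?_ ?_
    · funext c
      show t (F.connectedComponentMk c.out) = t c
      have hoe : F.connectedComponentMk c.out = c := c.out_eq
      rw [hoe]
    · exact DFunLike.ext _ _ fun x => rfl

def sum2Equiv {β : Type} : (Fin 2) × β ≃ (β ⊕ β) where
  toFun p := if p.1 = 0 then Sum.inl p.2 else Sum.inr p.2
  invFun s := Sum.elim (fun b => ((0 : Fin 2), b)) (fun b => ((1 : Fin 2), b)) s
  left_inv p := by
    rcases p with ⟨i, b⟩
    fin_cases i <;> simp
  right_inv s := by rcases s with b | b <;> simp

def sum3Equiv {β : Type} : (Fin 3) × β ≃ (β ⊕ (β ⊕ β)) where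
  toFun p := if p.1 = 0 then Sum.inl p.2
    else if p.1 = 1 then Sum.inr (Sum.inl p.2) else Sum.inr (Sum.inr p.2)
  invFun s := Sum.elim (fun b => ((0 : Fin 3), b))
    (Sum.elim (fun b => ((1 : Fin 3), b)) (fun b => ((2 : Fin 3), b))) s
  left_inv p := by
    rcases p with ⟨i, b⟩
    fin_cases i <;> simp
  right_inv s := by rcases s with b | b | b <;> simp

def iso2 {β : Type} (G : SimpleGraph β) : boxSum (Fin 2) G ≃g (G ⊕g G) := by
  refine ⟨sum2Equiv, ?_⟩
  rintro ⟨i, a⟩ ⟨j, b⟩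
  show (G ⊕g G).Adj (sum2Equiv (i, a)) (sum2Equiv (j, b)) ↔ (i = j ∧ G.Adj a b)
  fin_cases i <;> fin_cases j <;>
    simp [sum2Equiv, SimpleGraph.sum] <;> decide

def iso3 {β : Type} (G : SimpleGraph β) : boxSum (Fin 3) G ≃g (G ⊕g (G ⊕g G)) := by
  refine ⟨sum3Equiv, ?_⟩
  rintro ⟨i, a⟩ ⟨j, b⟩
  show (G ⊕g (G ⊕g G)).Adj (sum3Equiv (i, a)) (sum3Equiv (j, b)) ↔ (i = j ∧ G.Adj a b)
  fin_cases i <;> fin_cases j <;>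
    simp [sum3Equiv, SimpleGraph.sum] <;> decide

end Box

theorem main_card [Fintype α] (F : SimpleGraph α) (k m : ℕ) (hm : 3 ≤ m) (hk : 1 ≤ k)
    (hcard : Fintype.card α < m) :
    Nat.card (F →g cycleGraph (k * m)) =
      Nat.card ((F.ConnectedComponent → Fin k) × (F →g cycleGraph m)) := by
  have hkm : 3 ≤ k * m := le_trans hm (Nat.le_mul_of_pos_left m (by omega))
  apply Nat.card_congr
  refine ((homCongr (zcIso (k * m) hkm)).trans ?_)
  refine ((homEquivSub (k * m) hkm).trans ?_)
  refine ((liftEquivSub hm hk hcard).trans ?_)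
  exact Equiv.prodCongr (Equiv.refl _)
    (((homEquivSub m hm).symm).trans (homCongr (zcIso m hm)).symm)

theorem sum3_card [Fintype α] (F : SimpleGraph α) {β : Type} (G : SimpleGraph β) :
    Nat.card ((F.ConnectedComponent → Fin 3) × (F →g G)) =
      Nat.card (F →g (G ⊕g (G ⊕g G))) := by
  apply Nat.card_congr
  exact (boxEquiv (Fin 3) β G).symm.trans (homCongr (iso3 G))

theorem sum2_card [Fintype α] (F : SimpleGraph α) {β : Type} (G : SimpleGraph β) :
    Nat.card ((F.ConnectedComponent → Fin 2) × (F →g G)) =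
      Nat.card (F →g (G ⊕g G)) := by
  apply Nat.card_congr
  exact (boxEquiv (Fin 2) β G).symm.trans (homCongr (iso2 G))

end Stmt17

theorem stmt_17 {α : Type} [Fintype α] (ℓ : ℕ) (hℓ : 1 ≤ ℓ)
    (F : SimpleGraph α) (hF : Fintype.card α < 4 * ℓ + 2) :
    homCount F (cycleGraph (12 * ℓ + 6))
      = homCount F (cycleGraph (4 * ℓ + 2) ⊕g (cycleGraph (4 * ℓ + 2) ⊕g cycleGraph (4 * ℓ + 2))) ∧
    homCount F (cycleGraph (12 * ℓ + 6))
      = homCount F (cycleGraph (6 * ℓ + 3) ⊕g cycleGraph (6 * ℓ + 3)) := by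
  constructor
  · show Nat.card _ = Nat.card _
    rw [show 12 * ℓ + 6 = 3 * (4 * ℓ + 2) by ring]
    rw [Stmt17.main_card F 3 (4 * ℓ + 2) (by omega) (by omega) hF]
    exact Stmt17.sum3_card F (cycleGraph (4 * ℓ + 2))
  · show Nat.card _ = Nat.card _
    rw [show 12 * ℓ + 6 = 2 * (6 * ℓ + 3) by ring]
    rw [Stmt17.main_card F 2 (6 * ℓ + 3) (by omega) (by omega) (by omega)]
    exact Stmt17.sum2_card F (cycleGraph (6 * ℓ + 3))
end
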